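/- Let (Ω, ℱ, P) be a probability space carrying an i.i.d. sequence (D_i)_{i≥1} of nonnegative integrable real random variables with common mean m > 0, and for each α ∈ (0,1) a random variable G_α with values in ℕ satisfying P(G_α ≥ n) = (1-α)^n for all n ∈ ℕ, independent of the whole sequence (D_i). Then, as α → 0⁺, the law of the random variable α·∑_{i=1}^{G_α} D_i converges weakly (i.e. in distribution) to the exponential distribution with rate 1/m (mean m). -/

import Mathlib

set_option maxHeartbeats 1000000

open Filter MeasureTheory ProbabilityTheory

open scoped ENNReal NNReal Topology

section Aux
open Set Real


open Set

lemma floor_aux {c : ℝ} (hc : 0 < c) {n : ℕ} {x : ℝ}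
    (hx : x ∈ Ico (n * c) (((n : ℝ) + 1) * c)) : ⌊x / c⌋₊ = n := by
  obtain ⟨h1, h2⟩ := hx
  have hx0 : (0:ℝ) ≤ x := le_trans (by positivity) h1
  rw [Nat.floor_eq_iff (by positivity)]
  constructor
  · rwa [le_div_iff₀ hc]
  · rwa [div_lt_iff₀ hc]

lemma iUnion_Ico_eq {c : ℝ} (hc : 0 < c) :
    (⋃ n : ℕ, Ico ((n : ℝ) * c) (((n : ℝ) + 1) * c)) = Ici 0 := by
  ext x
  simp only [mem_iUnion, mem_Ico, mem_Ici]
  constructor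
  · rintro ⟨n, h1, _⟩; exact le_trans (by positivity) h1
  · intro hx
    refine ⟨⌊x / c⌋₊, ?_, ?_⟩
    · rw [← le_div_iff₀ hc]; exact Nat.floor_le (by positivity)
    · rw [← div_lt_iff₀ hc]; exact Nat.lt_floor_add_one _

lemma tsum_eq_integral_floor {c : ℝ} (hc : 0 < c) (g : ℕ → ℝ)
    (hg : Summable fun n => ‖g n‖) :
    ∑' n, g n = ∫ x in Ioi (0:ℝ), g ⌊x / c⌋₊ / c := by
  have hF : Measurable fun x : ℝ => g ⌊x / c⌋₊ / c :=
    (measurable_from_nat.comp ((measurable_id.div_const c).nat_floor)).div_const c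
  set s : ℕ → Set ℝ := fun n => Ico ((n : ℝ) * c) (((n : ℝ) + 1) * c) with hs
  have hmeas : ∀ n, MeasurableSet (s n) := fun n => measurableSet_Ico
  have hdisj : Pairwise (Function.onFun Disjoint s) := by
    intro i j hij
    refine Set.disjoint_left.2 fun x hxi hxj => hij ?_
    rw [← floor_aux hc hxi, ← floor_aux hc hxj]
  have hconst : ∀ n, ∀ x ∈ s n, g ⌊x / c⌋₊ / c = g n / c := by
    intro n x hx; rw [floor_aux hc hx]
  have hvol : ∀ n : ℕ, volume (s n) = ENNReal.ofReal c := by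
    intro n
    rw [hs]
    simp only [Real.volume_Ico]
    congr 1
    ring
  have hint : IntegrableOn (fun x => g ⌊x / c⌋₊ / c) (⋃ n, s n) := by
    refine ⟨hF.aestronglyMeasurable.restrict, ?_⟩
    rw [hasFiniteIntegral_iff_norm, lintegral_iUnion hmeas hdisj]
    have : ∀ n : ℕ, ∫⁻ x in s n, ENNReal.ofReal ‖g ⌊x / c⌋₊ / c‖ = ENNReal.ofReal ‖g n‖ := by
      intro n
      rw [setLIntegral_congr_fun (hmeas n)
        (fun x hx => by rw [hconst n x hx])]
      rw [lintegral_const, Measure.restrict_apply_univ, hvol]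
      rw [← ENNReal.ofReal_mul (norm_nonneg _)]
      congr 1
      rw [norm_div, Real.norm_of_nonneg hc.le, div_mul_cancel₀]
      exact hc.ne'
    rw [funext this] at *
    · rw [← ENNReal.ofReal_tsum_of_nonneg (fun n => norm_nonneg _) hg]
      exact ENNReal.ofReal_lt_top
  have key : ∫ x in ⋃ n, s n, g ⌊x / c⌋₊ / c = ∑' n, g n := by
    rw [integral_iUnion hmeas hdisj hint]
    congr 1
    ext n
    rw [setIntegral_congr_fun (hmeas n) (hconst n), setIntegral_const, measureReal_def, hvol,
      ENNReal.toReal_ofReal hc.le, smul_eq_mul]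
    field_simp
  rw [iUnion_Ico_eq hc] at key
  rw [← key, integral_Ici_eq_integral_Ioi]

lemma log_one_sub_div_tendsto :
    Tendsto (fun α : ℝ => Real.log (1 - α) / α) (𝓝[≠] (0:ℝ)) (𝓝 (-1)) := by
  have h : HasDerivAt (fun y : ℝ => Real.log (1 - y)) (-1) 0 := by
    have := ((hasDerivAt_id (0:ℝ)).const_sub 1).log (by norm_num)
    simpa using this
  have := hasDerivAt_iff_tendsto_slope.1 h
  refine this.congr fun α => ?_
  simp [slope, vsub_eq_sub, Real.log_one, div_eq_inv_mul]

lemma tendsto_mul_floor {m x : ℝ} (hm : 0 < m) (hx : 0 < x) :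
    Tendsto (fun α : ℝ => α * m * (⌊x / (α * m)⌋₊ : ℝ)) (𝓝[Set.Ioo (0:ℝ) 1] 0) (𝓝 x) := by
  have hlow : Tendsto (fun α : ℝ => x - α * m) (𝓝[Set.Ioo (0:ℝ) 1] 0) (𝓝 x) := by
    have : Tendsto (fun α : ℝ => x - α * m) (𝓝 0) (𝓝 (x - 0 * m)) :=
      (continuous_const.sub (continuous_id.mul continuous_const)).tendsto 0
    simpa using this.mono_left nhdsWithin_le_nhds
  refine tendsto_of_tendsto_of_tendsto_of_le_of_le' hlow tendsto_const_nhds ?_ ?_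
  · filter_upwards [self_mem_nhdsWithin] with α hα
    have hc : 0 < α * m := mul_pos hα.1 hm
    have := Nat.lt_floor_add_one (x / (α * m))
    rw [div_lt_iff₀ hc] at this
    nlinarith
  · filter_upwards [self_mem_nhdsWithin] with α hα
    have hc : 0 < α * m := mul_pos hα.1 hm
    have := Nat.floor_le (show 0 ≤ x / (α * m) by positivity)
    rw [le_div_iff₀ hc] at this
    nlinarith

lemma my_tendsto_floor_atTop {m x : ℝ} (hm : 0 < m) (hx : 0 < x) :
    Tendsto (fun α : ℝ => ⌊x / (α * m)⌋₊) (𝓝[Set.Ioo (0:ℝ) 1] 0) atTop := by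
  have h1 : Tendsto (fun α : ℝ => x / (α * m)) (𝓝[Set.Ioo (0:ℝ) 1] 0) atTop := by
    have h2 : Tendsto (fun α : ℝ => α⁻¹) (𝓝[Set.Ioo (0:ℝ) 1] 0) atTop :=
      tendsto_inv_nhdsGT_zero.mono_left
        (nhdsWithin_mono _ (fun y hy => hy.1))
    have h3 := h2.const_mul_atTop (show (0:ℝ) < x / m by positivity)
    refine h3.congr fun α => ?_
    rw [mul_comm]; field_simp
  exact tendsto_nat_floor_atTop.comp h1

lemma pointwise_lim {m x : ℝ} (hm : 0 < m) (hx : 0 < x) (f : BoundedContinuousFunction ℝ ℝ)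
    {s : ℕ → ℝ} (hs : Tendsto (fun n => s n / n) atTop (𝓝 m)) :
    Tendsto (fun α : ℝ => f (α * s ⌊x / (α * m)⌋₊) * ((1 - α) ^ ⌊x / (α * m)⌋₊ / m))
      (𝓝[Set.Ioo (0:ℝ) 1] 0) (𝓝 (f x * (m⁻¹ * Real.exp (-(m⁻¹ * x))))) := by
  set l := 𝓝[Set.Ioo (0:ℝ) 1] (0:ℝ) with hl
  set N : ℝ → ℕ := fun α => ⌊x / (α * m)⌋₊ with hN
  have hNtop : Tendsto N l atTop := my_tendsto_floor_atTop hm hx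
  have hcN : Tendsto (fun α => α * m * (N α : ℝ)) l (𝓝 x) := tendsto_mul_floor hm hx
  have hmem : ∀ᶠ α in l, α ∈ Set.Ioo (0:ℝ) 1 := self_mem_nhdsWithin
  have hαs : Tendsto (fun α => α * s (N α)) l (𝓝 x) := by
    have h1 : Tendsto (fun α => s (N α) / (N α : ℝ)) l (𝓝 m) := hs.comp hNtop
    have h2 : Tendsto (fun α => α * m * (N α : ℝ) * (s (N α) / (N α : ℝ)) / m) l
        (𝓝 (x * m / m)) := (hcN.mul h1).div_const m
    rw [mul_div_assoc, div_self hm.ne', mul_one] at h2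
    refine h2.congr' ?_
    filter_upwards [hNtop.eventually_ge_atTop 1, hmem] with α hα1 hα
    have hNne : ((N α : ℝ)) ≠ 0 := by
      exact_mod_cast Nat.one_le_iff_ne_zero.1 hα1
    field_simp
  have h1 : Tendsto (fun α => f (α * s (N α))) l (𝓝 (f x)) :=
    (f.continuous.tendsto x).comp hαs
  have hlog : Tendsto (fun α => (N α : ℝ) * Real.log (1 - α)) l (𝓝 (-(m⁻¹ * x))) := by
    have hld : Tendsto (fun α : ℝ => Real.log (1 - α) / α) l (𝓝 (-1)) :=
      log_one_sub_div_tendsto.mono_left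
        (nhdsWithin_mono _ (fun y hy => ne_of_gt hy.1))
    have h2 : Tendsto (fun α => α * m * (N α : ℝ) * (Real.log (1 - α) / α) / m) l
        (𝓝 (x * (-1) / m)) := (hcN.mul hld).div_const m
    have : x * (-1) / m = -(m⁻¹ * x) := by ring
    rw [this] at h2
    refine h2.congr' ?_
    filter_upwards [hmem] with α hα
    have hα0 : α ≠ 0 := ne_of_gt hα.1
    have hm' : m ≠ 0 := hm.ne'
    field_simp
  have h2 : Tendsto (fun α => (1 - α) ^ N α) l (𝓝 (Real.exp (-(m⁻¹ * x)))) := by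
    have := (Real.continuous_exp.tendsto _).comp hlog
    refine this.congr' ?_
    filter_upwards [hmem] with α hα
    have h1α : (0:ℝ) < 1 - α := by linarith [hα.2]
    simp only [Function.comp_apply]
    rw [Real.exp_nat_mul, Real.exp_log h1α]
  have := h1.mul (h2.div_const m)
  convert this using 2
  ring

lemma pow_floor_bound {m x α : ℝ} (hm : 0 < m) (hx : 0 < x) (hα : α ∈ Set.Ioo (0:ℝ) 1)
    (hhalf : α ≤ 1/2) :
    (1 - α) ^ ⌊x / (α * m)⌋₊ ≤ 2 * Real.exp (-(m⁻¹ * x)) := by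
  obtain ⟨hα0, hα1⟩ := hα
  have h1α : (0:ℝ) < 1 - α := by linarith
  set N := ⌊x / (α * m)⌋₊ with hN
  have hc : 0 < α * m := mul_pos hα0 hm
  rw [show (1 - α) ^ N = Real.exp ((N : ℝ) * Real.log (1 - α)) by
    rw [Real.exp_nat_mul, Real.exp_log h1α]]
  rw [show (2 : ℝ) * Real.exp (-(m⁻¹ * x)) = Real.exp (Real.log 2 + -(m⁻¹ * x)) by
    rw [Real.exp_add, Real.exp_log two_pos]]
  rw [Real.exp_le_exp]
  have hlogneg : Real.log (1 - α) < 0 := Real.log_neg h1α (by linarith)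
  have hNgt : x / (α * m) - 1 < (N : ℝ) := by
    have := Nat.lt_floor_add_one (x / (α * m))
    linarith
  have step1 : (N : ℝ) * Real.log (1 - α) ≤ (x / (α * m) - 1) * Real.log (1 - α) := by
    apply mul_le_mul_of_nonpos_right hNgt.le hlogneg.le
  have hlogle : Real.log (1 - α) ≤ -α := by
    have := Real.log_le_sub_one_of_pos h1α
    linarith
  have step2 : (x / (α * m)) * Real.log (1 - α) ≤ -(m⁻¹ * x) := by
    have h := mul_le_mul_of_nonneg_left hlogle (show 0 ≤ x / (α * m) by positivity)
    have : x / (α * m) * (-α) = -(m⁻¹ * x) := by field_simp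
    linarith
  have step3 : -Real.log (1 - α) ≤ Real.log 2 := by
    have : Real.log (1 - α) ≥ Real.log (1/2) := by
      apply Real.log_le_log (by norm_num)
      linarith
    have h2 : Real.log (1/2) = -Real.log 2 := by
      rw [Real.log_div one_ne_zero two_ne_zero, Real.log_one]; ring
    linarith
  nlinarith [step1, step2, step3]

lemma floor_aux' {c : ℝ} (hc : 0 < c) {n : ℕ} {x : ℝ}
    (hx : x ∈ Set.Ico ((n : ℝ) * c) (((n : ℝ) + 1) * c)) : ⌊x / c⌋₊ = n := by
  obtain ⟨h1, h2⟩ := hx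
  have hx0 : (0:ℝ) ≤ x := le_trans (by positivity) h1
  rw [Nat.floor_eq_iff (by positivity)]
  exact ⟨by rwa [le_div_iff₀ hc], by rwa [div_lt_iff₀ hc]⟩

lemma det_tendsto {m : ℝ} (hm : 0 < m) (f : BoundedContinuousFunction ℝ ℝ)
    {s : ℕ → ℝ} (hs : Tendsto (fun n => s n / n) atTop (𝓝 m)) :
    Tendsto (fun α : ℝ => ∑' n, α * (1 - α) ^ n * f (α * s n)) (𝓝[Set.Ioo (0:ℝ) 1] 0)
      (𝓝 (∫ x in Set.Ioi (0:ℝ), f x * (m⁻¹ * Real.exp (-(m⁻¹ * x))))) := by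
  set l := 𝓝[Set.Ioo (0:ℝ) 1] (0:ℝ) with hl
  have hmem : ∀ᶠ α in l, α ∈ Set.Ioo (0:ℝ) 1 := self_mem_nhdsWithin
  set F : ℝ → ℝ → ℝ :=
    fun α x => f (α * s ⌊x / (α * m)⌋₊) * ((1 - α) ^ ⌊x / (α * m)⌋₊ / m) with hF
  have key : Tendsto (fun α => ∫ x in Set.Ioi (0:ℝ), F α x) l
      (𝓝 (∫ x in Set.Ioi (0:ℝ), f x * (m⁻¹ * Real.exp (-(m⁻¹ * x))))) := by
    apply tendsto_integral_filter_of_dominated_convergence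
      (fun x => ‖f‖ * (2 * Real.exp (-(m⁻¹ * x))) / m)
    · filter_upwards [hmem] with α hα
      exact ((measurable_from_nat
        (f := fun n : ℕ => f (α * s n) * ((1 - α) ^ n / m))).comp
        ((measurable_id.div_const (α * m)).nat_floor)).aestronglyMeasurable.restrict
    · have hhalf : ∀ᶠ α : ℝ in l, α < 1/2 :=
        (eventually_lt_nhds (by norm_num : (0:ℝ) < 1/2)).filter_mono nhdsWithin_le_nhds
      filter_upwards [hmem, hhalf] with α hα hα2
      filter_upwards [ae_restrict_mem measurableSet_Ioi] with x hx
      have hb := pow_floor_bound hm hx hα hα2.le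
      have h1α : (0:ℝ) < 1 - α := by linarith [hα.2]
      have hp : (0:ℝ) ≤ (1 - α) ^ ⌊x / (α * m)⌋₊ := by positivity
      rw [hF]
      simp only [norm_mul, norm_div, Real.norm_of_nonneg hp,
        Real.norm_of_nonneg hm.le]
      rw [mul_div_assoc]
      refine mul_le_mul (f.norm_coe_le_norm _) ?_ (div_nonneg hp hm.le) (norm_nonneg _)
      gcongr
    · have := (((exp_neg_integrableOn_Ioi 0 (by positivity : 0 < m⁻¹)).const_mul
        2).const_mul ‖f‖).div_const m
      simpa [neg_mul] using this
    · filter_upwards [ae_restrict_mem measurableSet_Ioi] with x hx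
      exact pointwise_lim hm hx f hs
  refine key.congr' ?_
  filter_upwards [hmem] with α hα
  obtain ⟨hα0, hα1⟩ := hα
  have hc : 0 < α * m := mul_pos hα0 hm
  have hsum : Summable fun n => ‖α * (1 - α) ^ n * f (α * s n)‖ := by
    have hgeo : Summable fun n : ℕ => ‖f‖ * (α * (1 - α) ^ n) :=
      ((summable_geometric_of_lt_one (by linarith) (by linarith)).mul_left
        α).mul_left ‖f‖
    refine hgeo.of_nonneg_of_le (fun n => norm_nonneg _) fun n => ?_
    · have h1α : (0:ℝ) < 1 - α := by linarith
      rw [norm_mul, norm_mul, Real.norm_of_nonneg hα0.le,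
        Real.norm_of_nonneg (by positivity : (0:ℝ) ≤ (1 - α) ^ n)]
      calc α * (1 - α) ^ n * ‖f (α * s n)‖ ≤ α * (1 - α) ^ n * ‖f‖ := by
            apply mul_le_mul_of_nonneg_left (f.norm_coe_le_norm _) (by positivity)
        _ = ‖f‖ * (α * (1 - α) ^ n) := by ring
  rw [tsum_eq_integral_floor hc _ hsum]
  refine setIntegral_congr_fun measurableSet_Ioi fun x hx => ?_
  rw [hF]
  have hα0' : α ≠ 0 := ne_of_gt hα0
  field_simp

section IndepPart

variable {Ω : Type*} [MeasurableSpace Ω] (μ : Measure Ω) [IsProbabilityMeasure μ]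

lemma map_G_singleton {α : ℝ} (hα : α ∈ Set.Ioo (0:ℝ) 1) {G : Ω → ℕ} (hGm : Measurable G)
    (hGgeom : ∀ n : ℕ, μ {ω | n ≤ G ω} = ENNReal.ofReal ((1 - α) ^ n)) (n : ℕ) :
    (μ.map G) {n} = ENNReal.ofReal (α * (1 - α) ^ n) := by
  obtain ⟨hα0, hα1⟩ := hα
  have h1α : (0:ℝ) < 1 - α := by linarith
  rw [Measure.map_apply hGm (measurableSet_singleton n)]
  have hset : G ⁻¹' {n} = {ω | n ≤ G ω} \ {ω | n + 1 ≤ G ω} := by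
    ext ω
    simp only [Set.mem_preimage, Set.mem_singleton_iff, Set.mem_diff, Set.mem_setOf_eq]
    omega
  have hsub : {ω | n + 1 ≤ G ω} ⊆ {ω | n ≤ G ω} := fun ω hω => by
    simp only [Set.mem_setOf_eq] at *; omega
  have hms : MeasurableSet {ω | n + 1 ≤ G ω} := hGm measurableSet_Ici
  rw [hset, measure_diff hsub hms.nullMeasurableSet (measure_ne_top μ _),
    hGgeom n, hGgeom (n+1), ← ENNReal.ofReal_sub _ (by positivity)]
  congr 1
  ring

lemma indep_fubini (D : ℕ → Ω → ℝ) (hDmeas : ∀ i, Measurable (D i))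
    (f : BoundedContinuousFunction ℝ ℝ) {α : ℝ} (hα : α ∈ Set.Ioo (0:ℝ) 1)
    {G : Ω → ℕ} (hGm : Measurable G)
    (hGgeom : ∀ n : ℕ, μ {ω | n ≤ G ω} = ENNReal.ofReal ((1 - α) ^ n))
    (hindep : IndepFun G (fun ω => (fun i => D i ω : ℕ → ℝ)) μ) :
    ∫ ω, f (α * ∑ i ∈ Finset.range (G ω), D i ω) ∂μ
      = ∫ ω, ∑' n, α * (1 - α) ^ n * f (α * ∑ i ∈ Finset.range n, D i ω) ∂μ := by
  obtain ⟨hα0, hα1⟩ := hα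
  have h1α : (0:ℝ) < 1 - α := by linarith
  set Dseq : Ω → (ℕ → ℝ) := fun ω i => D i ω with hDseq
  have hDseqm : Measurable Dseq := measurable_pi_lambda _ hDmeas
  set H : (ℕ → ℝ) × ℕ → ℝ := fun p => f (α * ∑ i ∈ Finset.range p.2, p.1 i) with hH
  have hHm : Measurable H := by
    apply measurable_from_prod_countable_left
    intro n
    show Measurable fun d : ℕ → ℝ => f (α * ∑ i ∈ Finset.range n, d i)
    exact f.continuous.measurable.comp
      (measurable_const.mul (Finset.measurable_sum _ (fun i _ => measurable_pi_apply i)))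
  have hHb : ∀ p, ‖H p‖ ≤ ‖f‖ := fun p => f.norm_coe_le_norm _
  set pair : Ω → (ℕ → ℝ) × ℕ := fun ω => (Dseq ω, G ω) with hpair
  have hpairm : Measurable pair := hDseqm.prodMk hGm
  have hlaw : μ.map pair = (μ.map Dseq).prod (μ.map G) :=
    (indepFun_iff_map_prod_eq_prod_map_map hDseqm.aemeasurable hGm.aemeasurable).1 hindep.symm
  have hprob1 : IsProbabilityMeasure (μ.map Dseq) := Measure.isProbabilityMeasure_map hDseqm.aemeasurable
  have hprob2 : IsProbabilityMeasure (μ.map G) := Measure.isProbabilityMeasure_map hGm.aemeasurable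
  have hHint : Integrable H ((μ.map Dseq).prod (μ.map G)) :=
    (integrable_const ‖f‖).mono' hHm.aestronglyMeasurable (ae_of_all _ hHb)
  have step1 : ∫ ω, f (α * ∑ i ∈ Finset.range (G ω), D i ω) ∂μ
      = ∫ p, H p ∂((μ.map Dseq).prod (μ.map G)) := by
    rw [← hlaw, integral_map hpairm.aemeasurable hHm.aestronglyMeasurable]
  rw [step1, integral_prod _ hHint]
  have inner : ∀ d : ℕ → ℝ, ∫ n, H (d, n) ∂(μ.map G)
      = ∑' n, α * (1 - α) ^ n * f (α * ∑ i ∈ Finset.range n, d i) := by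
    intro d
    have hint2 : Integrable (fun n => H (d, n)) (μ.map G) :=
      (integrable_const ‖f‖).mono'
        (hHm.comp (measurable_const.prodMk measurable_id)).aestronglyMeasurable
        (ae_of_all _ (fun n => hHb (d, n)))
    rw [integral_countable' hint2]
    refine tsum_congr fun n => ?_
    rw [measureReal_def, map_G_singleton μ ⟨hα0, hα1⟩ hGm hGgeom n, ENNReal.toReal_ofReal (by positivity),
      smul_eq_mul]
  calc ∫ d, ∫ n, H (d, n) ∂(μ.map G) ∂(μ.map Dseq)
      = ∫ d, (∑' n, α * (1 - α) ^ n * f (α * ∑ i ∈ Finset.range n, d i)) ∂(μ.map Dseq) := by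
        exact integral_congr_ae (ae_of_all _ inner)
    _ = ∫ ω, ∑' n, α * (1 - α) ^ n * f (α * ∑ i ∈ Finset.range n, D i ω) ∂μ := by
        rw [integral_map hDseqm.aemeasurable]
        apply Measurable.aestronglyMeasurable
        apply measurable_of_tendsto_metrizable
          (f := fun k (d : ℕ → ℝ) => ∑ n ∈ Finset.range k,
            α * (1 - α) ^ n * f (α * ∑ i ∈ Finset.range n, d i))
        · intro k
          apply Finset.measurable_sum
          intro n _
          exact measurable_const.mul (f.continuous.measurable.comp
            (measurable_const.mul (Finset.measurable_sum _ (fun i _ => measurable_pi_apply i))))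
        · rw [tendsto_pi_nhds]
          intro d
          have hsum : Summable fun n => α * (1 - α) ^ n * f (α * ∑ i ∈ Finset.range n, d i) := by
            apply Summable.of_norm
            have hgeo : Summable fun n : ℕ => ‖f‖ * (α * (1 - α) ^ n) :=
              ((summable_geometric_of_lt_one (by linarith) (by linarith)).mul_left α).mul_left ‖f‖
            refine hgeo.of_nonneg_of_le (fun n => norm_nonneg _) fun n => ?_
            rw [norm_mul, norm_mul, Real.norm_of_nonneg hα0.le,
              Real.norm_of_nonneg (by positivity : (0:ℝ) ≤ (1 - α) ^ n)]
            calc α * (1 - α) ^ n * ‖f (α * ∑ i ∈ Finset.range n, d i)‖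
                ≤ α * (1 - α) ^ n * ‖f‖ :=
                  mul_le_mul_of_nonneg_left (f.norm_coe_le_norm _) (by positivity)
              _ = ‖f‖ * (α * (1 - α) ^ n) := by ring
          exact hsum.hasSum.tendsto_sum_nat

end IndepPart

lemma integral_expMeasure {r : ℝ} (hr : 0 < r) (f : ℝ → ℝ) (hf : Measurable f) :
    ∫ x, f x ∂(expMeasure r) = ∫ x in Ioi (0:ℝ), f x * (r * exp (-(r * x))) := by
  have hd : expMeasure r
      = volume.withDensity (fun x => ((exponentialPDFReal r x).toNNReal : ℝ≥0∞)) := by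
    rw [expMeasure, gammaMeasure]
    congr 1
  rw [hd, integral_withDensity_eq_integral_smul
      ((measurable_exponentialPDFReal r).real_toNNReal) f]
  have hsupp : ∀ᵐ x : ℝ, x ∉ Ioi (0:ℝ) →
      (exponentialPDFReal r x).toNNReal • f x = 0 := by
    filter_upwards [compl_mem_ae_iff.2 (volume_singleton (a := (0:ℝ)))] with x hx hx'
    have hxneg : x < 0 := by
      simp only [mem_Ioi, not_lt] at hx'
      rcases lt_or_eq_of_le hx' with h | h
      · exact h
      · exact absurd h (by simpa using hx)
    have : exponentialPDFReal r x = 0 := by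
      rw [exponentialPDFReal, gammaPDFReal, if_neg (not_le.2 hxneg)]
    simp [this]
  rw [← setIntegral_eq_integral_of_ae_compl_eq_zero hsupp]
  refine setIntegral_congr_fun measurableSet_Ioi fun x hx => ?_
  have hx0 : (0:ℝ) ≤ x := le_of_lt hx
  rw [NNReal.smul_def, smul_eq_mul, Real.coe_toNNReal _ (exponentialPDFReal_nonneg hr x)]
  rw [exponentialPDFReal, gammaPDFReal, if_pos hx0]
  simp only [rpow_one, Real.Gamma_one, div_one, sub_self, rpow_zero, mul_one]
  ring


end Aux

/-- Law of large numbers justification of the exponential assumption: if `(D i)` is an i.i.d.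
sequence of nonnegative integrable random variables with mean `m > 0` and, for each
`α ∈ (0,1)`, `G α` is a geometric random variable with `P(G α ≥ n) = (1-α)^n`, independent of
the whole sequence `(D i)`, then the law of `α · ∑_{i < G α} D i` converges weakly, as
`α → 0⁺`, to the exponential distribution with rate `1/m`. -/
theorem geometric_sum_tendsto_exponential
    {Ω : Type*} [MeasurableSpace Ω] (μ : Measure Ω) [IsProbabilityMeasure μ]
    (D : ℕ → Ω → ℝ) (hDmeas : ∀ i, Measurable (D i))
    (hDindep : iIndepFun D μ)
    (hDident : ∀ i, IdentDistrib (D i) (D 0) μ μ)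
    (hDnonneg : ∀ i ω, 0 ≤ D i ω)
    (hDint : Integrable (D 0) μ)
    (m : ℝ) (hm : 0 < m) (hmean : ∫ ω, D 0 ω ∂μ = m)
    (G : ℝ → Ω → ℕ)
    (hGmeas : ∀ α ∈ Set.Ioo (0 : ℝ) 1, Measurable (G α))
    (hGgeom : ∀ α ∈ Set.Ioo (0 : ℝ) 1, ∀ n : ℕ,
      μ {ω | n ≤ G α ω} = ENNReal.ofReal ((1 - α) ^ n))
    (hGindep : ∀ α ∈ Set.Ioo (0 : ℝ) 1,
      IndepFun (G α) (fun ω => (fun i => D i ω : ℕ → ℝ)) μ) :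
    ∀ f : BoundedContinuousFunction ℝ ℝ,
      Tendsto
        (fun α : ℝ =>
          ∫ ω, f (α * ∑ i ∈ Finset.range (G α ω), D i ω) ∂μ)
        (nhdsWithin 0 (Set.Ioo 0 1))
        (nhds (∫ x, f x ∂(expMeasure (1 / m)))) := by
  intro f
  set l := 𝓝[Set.Ioo (0:ℝ) 1] (0:ℝ) with hl
  have hmem : ∀ᶠ α in l, α ∈ Set.Ioo (0:ℝ) 1 := self_mem_nhdsWithin
  -- rewrite the target integral
  have hC : ∫ x, f x ∂(expMeasure (1 / m))
      = ∫ x in Set.Ioi (0:ℝ), f x * (m⁻¹ * Real.exp (-(m⁻¹ * x))) := by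
    rw [integral_expMeasure (by positivity) f f.continuous.measurable]
    simp only [one_div]
  -- strong law of large numbers
  have hslln : ∀ᵐ ω ∂μ, Tendsto (fun n : ℕ => (∑ i ∈ Finset.range n, D i ω) / n)
      atTop (𝓝 m) := by
    have := strong_law_ae D hDint (fun i j hij => hDindep.indepFun hij) hDident
    filter_upwards [this] with ω hω
    rw [hmean] at hω
    refine hω.congr fun n => ?_
    rw [smul_eq_mul, div_eq_inv_mul]
  -- the averaged functions
  set I : ℝ → Ω → ℝ :=
    fun α ω => ∑' n, α * (1 - α) ^ n * f (α * ∑ i ∈ Finset.range n, D i ω) with hI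
  have key : Tendsto (fun α => ∫ ω, I α ω ∂μ) l
      (𝓝 (∫ _ : Ω, (∫ x in Set.Ioi (0:ℝ), f x * (m⁻¹ * Real.exp (-(m⁻¹ * x)))) ∂μ)) := by
    apply tendsto_integral_filter_of_dominated_convergence (fun _ : Ω => ‖f‖)
    · -- measurability
      filter_upwards [hmem] with α hα
      obtain ⟨hα0, hα1⟩ := hα
      have h1α : (0:ℝ) < 1 - α := by linarith
      apply Measurable.aestronglyMeasurable
      apply measurable_of_tendsto_metrizable
        (f := fun k ω => ∑ n ∈ Finset.range k,
          α * (1 - α) ^ n * f (α * ∑ i ∈ Finset.range n, D i ω))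
      · intro k
        apply Finset.measurable_sum
        intro n _
        exact measurable_const.mul (f.continuous.measurable.comp
          (measurable_const.mul (Finset.measurable_sum _ (fun i _ => hDmeas i))))
      · rw [tendsto_pi_nhds]
        intro ω
        have hsum : Summable fun n =>
            α * (1 - α) ^ n * f (α * ∑ i ∈ Finset.range n, D i ω) := by
          apply Summable.of_norm
          have hgeo : Summable fun n : ℕ => ‖f‖ * (α * (1 - α) ^ n) :=
            ((summable_geometric_of_lt_one (by linarith) (by linarith)).mul_left α).mul_left ‖f‖
          refine hgeo.of_nonneg_of_le (fun n => norm_nonneg _) fun n => ?_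
          rw [norm_mul, norm_mul, Real.norm_of_nonneg hα0.le,
            Real.norm_of_nonneg (pow_nonneg h1α.le n)]
          calc α * (1 - α) ^ n * ‖f (α * ∑ i ∈ Finset.range n, D i ω)‖
              ≤ α * (1 - α) ^ n * ‖f‖ :=
                mul_le_mul_of_nonneg_left (f.norm_coe_le_norm _) (mul_nonneg hα0.le (pow_nonneg h1α.le n))
            _ = ‖f‖ * (α * (1 - α) ^ n) := by ring
        exact hsum.hasSum.tendsto_sum_nat
    · -- bound
      filter_upwards [hmem] with α hα
      obtain ⟨hα0, hα1⟩ := hα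
      have h1α : (0:ℝ) < 1 - α := by linarith
      refine ae_of_all _ fun ω => ?_
      have hgeo : Summable fun n : ℕ => ‖f‖ * (α * (1 - α) ^ n) :=
        ((summable_geometric_of_lt_one (by linarith) (by linarith)).mul_left α).mul_left ‖f‖
      have hle : ∀ n : ℕ, ‖α * (1 - α) ^ n * f (α * ∑ i ∈ Finset.range n, D i ω)‖
          ≤ ‖f‖ * (α * (1 - α) ^ n) := by
        intro n
        rw [norm_mul, norm_mul, Real.norm_of_nonneg hα0.le,
          Real.norm_of_nonneg (pow_nonneg h1α.le n)]
        calc α * (1 - α) ^ n * ‖f (α * ∑ i ∈ Finset.range n, D i ω)‖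
            ≤ α * (1 - α) ^ n * ‖f‖ :=
              mul_le_mul_of_nonneg_left (f.norm_coe_le_norm _) (mul_nonneg hα0.le (pow_nonneg h1α.le n))
          _ = ‖f‖ * (α * (1 - α) ^ n) := by ring
      have h1 : ‖I α ω‖ ≤ ∑' n, ‖f‖ * (α * (1 - α) ^ n) :=
        (norm_tsum_le_tsum_norm (hgeo.of_nonneg_of_le (fun n => norm_nonneg _) hle)).trans
          (Summable.tsum_le_tsum hle (hgeo.of_nonneg_of_le (fun n => norm_nonneg _) hle) hgeo)
      have h2 : ∑' n : ℕ, ‖f‖ * (α * (1 - α) ^ n) = ‖f‖ := by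
        rw [tsum_mul_left, tsum_mul_left, tsum_geometric_of_lt_one (by linarith) (by linarith), sub_sub_cancel]
        field_simp
      rw [h2] at h1
      exact h1
    · exact integrable_const _
    · -- pointwise limit via strong law + deterministic lemma
      filter_upwards [hslln] with ω hω
      exact det_tendsto hm f hω
  have hconst : ∫ _ : Ω, (∫ x in Set.Ioi (0:ℝ), f x * (m⁻¹ * Real.exp (-(m⁻¹ * x)))) ∂μ
      = ∫ x, f x ∂(expMeasure (1 / m)) := by
    rw [integral_const, probReal_univ, one_smul, hC]
  rw [hconst] at key
  refine key.congr' ?_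
  filter_upwards [hmem] with α hα
  exact (indep_fubini μ D hDmeas f hα (hGmeas α hα) (hGgeom α hα) (hGindep α hα)).symm
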